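/- Consider conic optimization with one positive semidefinite block: for symmetric n×n matrices A₁, …, A_k, symmetric B, P ∈ ℝ^{k×k} symmetric positive semidefinite, q ∈ ℝᵏ, define the residual of (x, S, Z) (with x ∈ ℝᵏ and S, Z symmetric n×n) as the pair r_d = Px + (tr(A₁Z), …, tr(A_kZ)) + q and r_p = B − Σᵢ xᵢAᵢ − S, with ‖R‖_∞ the maximum absolute entry over r_d and r_p. Let x* ∈ ℝᵏ and let S*, Z* be symmetric positive semidefinite with S*Z* = 0 and rank(S*) + rank(Z*) = n. Set μ⁰ = ‖R(x*, S*, Z*)‖_∞, assumed positive, let C = S* − Z* with eigenvalues d₁, …, dₙ (all nonzero), let S⁰ be the unique symmetric positive definite solution of S − C − μ⁰S⁻¹ = 0, Z⁰ = S⁰ − C, and x⁰ = x*. Then ‖R(x⁰, S⁰, Z⁰)‖_∞ ≤ (1 + (maxᵢ tr|Aᵢ| + 1)/minⱼ |dⱼ|) · μ⁰, where tr|Aᵢ| denotes the sum of the absolute values of the eigenvalues of Aᵢ. -/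

import Mathlib

open Matrix
section StmtAux
variable {n : ℕ}

lemma aux_trace_sq_nonneg (M : Matrix (Fin n) (Fin n) ℝ) : 0 ≤ (M * Mᵀ).trace := by
  rw [Matrix.trace]
  refine Finset.sum_nonneg fun i _ => ?_
  simp only [Matrix.diag_apply, Matrix.mul_apply, Matrix.transpose_apply]
  exact Finset.sum_nonneg fun j _ => mul_self_nonneg _
lemma aux_trace_sq_zero {M : Matrix (Fin n) (Fin n) ℝ} (h : (M * Mᵀ).trace = 0) : M = 0 := by
  ext i j
  have h2 : ∀ i ∈ Finset.univ, (0:ℝ) ≤ (M * Mᵀ).diag i := fun i _ => by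
    simp only [Matrix.diag_apply, Matrix.mul_apply, Matrix.transpose_apply]
    exact Finset.sum_nonneg fun j _ => mul_self_nonneg _
  rw [Matrix.trace, Finset.sum_eq_zero_iff_of_nonneg h2] at h
  have := h i (Finset.mem_univ i)
  simp only [Matrix.diag_apply, Matrix.mul_apply, Matrix.transpose_apply] at this
  have h3 := (Finset.sum_eq_zero_iff_of_nonneg (fun j _ => mul_self_nonneg (M i j))).mp this j (Finset.mem_univ j)
  simpa [mul_self_eq_zero] using h3

lemma aux_ker {S Z : Matrix (Fin n) (Fin n) ℝ}
    (hZh : Zᵀ = Z) (hSZ : S * Z = 0) (hrank : S.rank + Z.rank = n)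
    {v : Fin n → ℝ} (hSv : S *ᵥ v = 0) (hZv : Z *ᵥ v = 0) : v = 0 := by
  have hle : LinearMap.range Z.mulVecLin ≤ LinearMap.ker S.mulVecLin := by
    rintro x ⟨y, rfl⟩
    simp only [LinearMap.mem_ker, Matrix.mulVecLin_apply, Matrix.mulVec_mulVec, hSZ,
      Matrix.zero_mulVec]
  have hfr : Module.finrank ℝ (LinearMap.ker S.mulVecLin) = Z.rank := by
    have h1 := LinearMap.finrank_range_add_finrank_ker S.mulVecLin
    have h2 : Module.finrank ℝ (Fin n → ℝ) = n := by simp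
    rw [h2] at h1
    have h3 : Module.finrank ℝ (LinearMap.range S.mulVecLin) = S.rank := rfl
    omega
  have heq : LinearMap.range Z.mulVecLin = LinearMap.ker S.mulVecLin :=
    Submodule.eq_of_le_of_finrank_eq hle (by rw [hfr]; rfl)
  have hv : v ∈ LinearMap.range Z.mulVecLin := by
    rw [heq]; simpa [LinearMap.mem_ker, Matrix.mulVecLin_apply] using hSv
  obtain ⟨b, hb⟩ := hv
  have hvv : v ⬝ᵥ v = 0 := by
    calc v ⬝ᵥ v = v ⬝ᵥ (Z *ᵥ b) := by rw [← hb]; rfl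
    _ = (v ᵥ* Z) ⬝ᵥ b := Matrix.dotProduct_mulVec _ _ _
    _ = (Zᵀ *ᵥ v) ⬝ᵥ b := by rw [Matrix.mulVec_transpose]
    _ = (Z *ᵥ v) ⬝ᵥ b := by rw [hZh]
    _ = 0 := by rw [hZv]; simp
  exact dotProduct_self_eq_zero.mp hvv

/-- Uniqueness of the positive definite solution of `S - C - μ • S⁻¹ = 0`. -/
lemma aux_unique {μ : ℝ} (hμ : 0 < μ) {S T C : Matrix (Fin n) (Fin n) ℝ}
    (hS : S.PosDef) (hT : T.PosDef)
    (h1 : S - C - μ • S⁻¹ = 0) (h2 : T - C - μ • T⁻¹ = 0) : S = T := by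
  have hSinv : S * S⁻¹ = 1 := Matrix.mul_nonsing_inv _ (isUnit_iff_isUnit_det _ |>.mp hS.isUnit)
  have hTinv : T⁻¹ * T = 1 := Matrix.nonsing_inv_mul _ (isUnit_iff_isUnit_det _ |>.mp hT.isUnit)
  have e1 : S * S = μ • 1 + S * C := by
    have h : S - C = μ • S⁻¹ := by linear_combination (norm := abel) h1
    calc S * S = S * (S - C) + S * C := by noncomm_ring
    _ = μ • 1 + S * C := by rw [h, Matrix.mul_smul, hSinv]
  have e2 : T * T = μ • 1 + C * T := by
    have h : T - C = μ • T⁻¹ := by linear_combination (norm := abel) h2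
    calc T * T = (T - C) * T + C * T := by noncomm_ring
    _ = μ • 1 + C * T := by rw [h, Matrix.smul_mul, hTinv]
  obtain ⟨D, hDdef⟩ : ∃ D, D = S - T := ⟨_, rfl⟩
  have key : S * D * T = (-μ) • D := by
    have h3 : S * D * T = S * S * T - S * (T * T) := by rw [hDdef]; noncomm_ring
    rw [h3, e1, e2]
    rw [Matrix.add_mul, Matrix.mul_add, Matrix.smul_mul, Matrix.mul_smul]
    simp only [Matrix.one_mul, Matrix.mul_one, hDdef]
    rw [neg_smul, smul_sub, Matrix.mul_assoc]
    abel
  obtain ⟨R, hRt, hR⟩ : ∃ R : Matrix (Fin n) (Fin n) ℝ, Rᵀ = R ∧ R * R = S :=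
    by open scoped MatrixOrder in exact ⟨CFC.sqrt S, by
      rw [← Matrix.conjTranspose_eq_transpose_of_trivial,
        (CFC.sqrt_nonneg S).posSemidef.isHermitian],
      CFC.sqrt_mul_sqrt_self S hS.posSemidef.nonneg⟩
  obtain ⟨Q, hQt, hQ⟩ : ∃ Q : Matrix (Fin n) (Fin n) ℝ, Qᵀ = Q ∧ Q * Q = T :=
    by open scoped MatrixOrder in exact ⟨CFC.sqrt T, by
      rw [← Matrix.conjTranspose_eq_transpose_of_trivial,
        (CFC.sqrt_nonneg T).posSemidef.isHermitian],
      CFC.sqrt_mul_sqrt_self T hT.posSemidef.nonneg⟩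
  have hDt : Dᵀ = D := by
    rw [hDdef, Matrix.transpose_sub, ← Matrix.conjTranspose_eq_transpose_of_trivial,
      ← Matrix.conjTranspose_eq_transpose_of_trivial, hS.isHermitian, hT.isHermitian]
  have tr1 : ((Q * D * R) * (Q * D * R)ᵀ).trace = -(μ * (D * Dᵀ).trace) := by
    have hMt : (Q * D * R)ᵀ = R * D * Q := by
      rw [Matrix.transpose_mul, Matrix.transpose_mul, hRt, hQt, hDt, Matrix.mul_assoc]
    have h1' : Q * D * R * (R * D * Q) = Q * (D * S * D * Q) := by
      rw [← hR]; simp only [← Matrix.mul_assoc]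
    have h2' : (D * S * D * Q) * Q = D * (S * D * T) := by
      rw [← hQ]; simp only [← Matrix.mul_assoc]
    rw [hMt, h1', Matrix.trace_mul_comm, h2', key, Matrix.mul_smul, Matrix.trace_smul, hDt]
    simp [smul_eq_mul]
  have h0 : (D * Dᵀ).trace = 0 := by
    have h1' := aux_trace_sq_nonneg (Q * D * R)
    rw [tr1] at h1'
    have h2' := aux_trace_sq_nonneg D
    nlinarith
  have hD0 := aux_trace_sq_zero h0
  rw [hDdef, sub_eq_zero] at hD0
  exact hD0

lemma aux_eig {S Z : Matrix (Fin n) (Fin n) ℝ}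
    (hS : S.PosSemidef) (hZ : Z.PosSemidef) (hSZ : S * Z = 0) (hZS : Z * S = 0)
    {v : Fin n → ℝ} {t : ℝ} (ht : t ≠ 0) (hv : (S - Z) *ᵥ v = t • v) :
    S *ᵥ v = max t 0 • v ∧ Z *ᵥ v = max (-t) 0 • v := by
  rcases ht.lt_or_gt with htn | htp
  · -- t < 0 : S *ᵥ v = 0
    have hw : S *ᵥ (S *ᵥ v) = t • (S *ᵥ v) := by
      have h1 : S *ᵥ ((S - Z) *ᵥ v) = S *ᵥ (S *ᵥ v) := by
        rw [Matrix.mulVec_mulVec, Matrix.mulVec_mulVec, Matrix.mul_sub, hSZ, sub_zero]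
      rw [hv, Matrix.mulVec_smul] at h1
      exact h1.symm
    have hw0 : S *ᵥ v = 0 := by
      have h2 := hS.dotProduct_mulVec_nonneg (S *ᵥ v)
      rw [hw] at h2
      simp only [star_trivial, dotProduct_smul, smul_eq_mul] at h2
      have h4 : 0 ≤ (S *ᵥ v) ⬝ᵥ (S *ᵥ v) := Finset.sum_nonneg fun i _ => mul_self_nonneg _
      have h3 : (S *ᵥ v) ⬝ᵥ (S *ᵥ v) = 0 := by nlinarith
      exact dotProduct_self_eq_zero.mp h3
    have hZv : Z *ᵥ v = (-t) • v := by
      have : S *ᵥ v - Z *ᵥ v = t • v := by rw [← Matrix.sub_mulVec, hv]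
      rw [hw0] at this
      rw [neg_smul, ← this]
      abel
    constructor
    · rw [hw0, max_eq_right htn.le, zero_smul]
    · rw [hZv, max_eq_left (by linarith)]
  · -- t > 0 : Z *ᵥ v = 0
    have hw : Z *ᵥ (Z *ᵥ v) = (-t) • (Z *ᵥ v) := by
      have h1 : Z *ᵥ ((S - Z) *ᵥ v) = -(Z *ᵥ (Z *ᵥ v)) := by
        rw [Matrix.mulVec_mulVec, Matrix.mulVec_mulVec, Matrix.mul_sub, hZS]
        simp [Matrix.neg_mulVec, Matrix.mulVec_mulVec]
      rw [hv, Matrix.mulVec_smul] at h1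
      rw [neg_smul, ← neg_neg (Z *ᵥ Z *ᵥ v), ← h1]
    have hw0 : Z *ᵥ v = 0 := by
      have h2 := hZ.dotProduct_mulVec_nonneg (Z *ᵥ v)
      rw [hw] at h2
      simp only [star_trivial, dotProduct_smul, smul_eq_mul] at h2
      have h4 : 0 ≤ (Z *ᵥ v) ⬝ᵥ (Z *ᵥ v) := Finset.sum_nonneg fun i _ => mul_self_nonneg _
      have h3 : (Z *ᵥ v) ⬝ᵥ (Z *ᵥ v) = 0 := by nlinarith
      exact dotProduct_self_eq_zero.mp h3
    have hSv : S *ᵥ v = t • v := by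
      have : S *ᵥ v - Z *ᵥ v = t • v := by rw [← Matrix.sub_mulVec, hv]
      rw [hw0, sub_zero] at this
      exact this
    constructor
    · rw [hSv, max_eq_left htp.le]
    · rw [hw0, max_eq_right (by linarith : -t ≤ 0), zero_smul]

noncomputable def gfun (μ t : ℝ) : ℝ := (t + Real.sqrt (t^2 + 4*μ)) / 2

lemma gfun_pos {μ : ℝ} (hμ : 0 < μ) (t : ℝ) : 0 < gfun μ t := by
  have h0 : (0:ℝ) ≤ t^2 + 4*μ := by nlinarith
  have hs : Real.sqrt (t^2 + 4*μ) ^ 2 = t^2 + 4*μ := Real.sq_sqrt h0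
  have hs0 : 0 ≤ Real.sqrt (t^2 + 4*μ) := Real.sqrt_nonneg _
  unfold gfun
  nlinarith [sq_nonneg (t + Real.sqrt (t^2+4*μ))]
lemma gfun_quad {μ : ℝ} (hμ : 0 < μ) (t : ℝ) : gfun μ t * (gfun μ t - t) = μ := by
  have h0 : (0:ℝ) ≤ t^2 + 4*μ := by nlinarith
  have hs : Real.sqrt (t^2 + 4*μ) ^ 2 = t^2 + 4*μ := Real.sq_sqrt h0
  unfold gfun; nlinarith [hs]
lemma gfun_sub_nonneg {μ : ℝ} (hμ : 0 < μ) (t : ℝ) : 0 ≤ gfun μ t - max t 0 := by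
  have h0 : (0:ℝ) ≤ t^2 + 4*μ := by nlinarith
  have hs : Real.sqrt (t^2 + 4*μ) ^ 2 = t^2 + 4*μ := Real.sq_sqrt h0
  have hs0 : 0 ≤ Real.sqrt (t^2 + 4*μ) := Real.sqrt_nonneg _
  have habs : |t| ≤ Real.sqrt (t^2+4*μ) := by
    nlinarith [abs_nonneg t, sq_abs t]
  unfold gfun
  rcases le_or_gt t 0 with h | h
  · rw [max_eq_right h]; nlinarith [abs_nonneg t, le_abs_self t, neg_abs_le t]
  · rw [max_eq_left h.le]; nlinarith [le_abs_self t]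
lemma gfun_sub_le {μ : ℝ} (hμ : 0 < μ) (t : ℝ) : (gfun μ t - max t 0) * |t| ≤ μ := by
  have h0 : (0:ℝ) ≤ t^2 + 4*μ := by nlinarith
  have hs : Real.sqrt (t^2 + 4*μ) ^ 2 = t^2 + 4*μ := Real.sq_sqrt h0
  have hs0 : 0 ≤ Real.sqrt (t^2 + 4*μ) := Real.sqrt_nonneg _
  have key : (gfun μ t - max t 0) = (Real.sqrt (t^2+4*μ) - |t|) / 2 := by
    unfold gfun
    rcases le_or_gt t 0 with h | h
    · rw [max_eq_right h, abs_of_nonpos h]; ring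
    · rw [max_eq_left h.le, abs_of_pos h]; ring
  rw [key]
  nlinarith [sq_nonneg (Real.sqrt (t^2+4*μ) - |t|), sq_abs t]

lemma aux_col_to_mat {U M : Matrix (Fin n) (Fin n) ℝ} (hU2 : U * star U = 1)
    {f : Fin n → ℝ} (hcol : ∀ j, M *ᵥ (fun i => U i j) = f j • (fun i => U i j)) :
    M = U * diagonal f * star U := by
  have h1 : M * U = U * diagonal f := by
    ext i j
    have := congrFun (hcol j) i
    simp only [Matrix.mulVec, dotProduct, Pi.smul_apply, smul_eq_mul] at this
    rw [Matrix.mul_apply, Matrix.mul_diagonal]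
    rw [this]; ring
  calc M = M * (U * star U) := by rw [hU2, Matrix.mul_one]
  _ = (M * U) * star U := by rw [Matrix.mul_assoc]
  _ = U * diagonal f * star U := by rw [h1]

lemma aux_conj_posdef {U : Matrix (Fin n) (Fin n) ℝ} (hU1 : star U * U = 1)
    (hU2 : U * star U = 1) {f : Fin n → ℝ} (hf : ∀ j, 0 < f j) :
    (U * diagonal f * star U).PosDef := by
  have hD : (diagonal f).PosDef := Matrix.PosDef.diagonal hf
  refine Matrix.PosDef.of_dotProduct_mulVec_pos ?_ fun x hx => ?_
  · have := (hD.posSemidef.mul_mul_conjTranspose_same U).1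
    simpa [Matrix.star_eq_conjTranspose] using this
  · have hy : star U *ᵥ x ≠ 0 := by
      intro h
      apply hx
      have : U *ᵥ (star U *ᵥ x) = x := by
        rw [Matrix.mulVec_mulVec, hU2, Matrix.one_mulVec]
      rw [h, Matrix.mulVec_zero] at this
      exact this.symm
    have := hD.dotProduct_mulVec_pos hy
    convert this using 1
    rw [Matrix.mul_assoc, Matrix.mulVec_mulVec]
    rw [← Matrix.mulVec_mulVec, Matrix.dotProduct_mulVec (star x)]
    congr 1
    · rw [Matrix.star_mulVec]
      rfl

lemma aux_dot_conj {U : Matrix (Fin n) (Fin n) ℝ} {e : Fin n → ℝ} (w : Fin n → ℝ) :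
    w ⬝ᵥ ((U * diagonal e * star U) *ᵥ w) =
      ∑ l, e l * ((star U *ᵥ w) l)^2 := by
  have hsU : star U = Uᵀ := by
    rw [Matrix.star_eq_conjTranspose, Matrix.conjTranspose_eq_transpose_of_trivial]
  have h1 : (U * diagonal e * star U) *ᵥ w = U *ᵥ (diagonal e *ᵥ (star U *ᵥ w)) := by
    rw [Matrix.mulVec_mulVec, Matrix.mulVec_mulVec]
  rw [h1, Matrix.dotProduct_mulVec]
  have h2 : w ᵥ* U = star U *ᵥ w := by rw [hsU, Matrix.mulVec_transpose]
  rw [h2]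
  simp only [dotProduct, Matrix.mulVec_diagonal]
  exact Finset.sum_congr rfl fun l _ => by ring

lemma aux_dot_self {U : Matrix (Fin n) (Fin n) ℝ} (hU2 : U * star U = 1) (w : Fin n → ℝ) :
    ∑ l, ((star U *ᵥ w) l)^2 = w ⬝ᵥ w := by
  have hsU : star U = Uᵀ := by
    rw [Matrix.star_eq_conjTranspose, Matrix.conjTranspose_eq_transpose_of_trivial]
  have h0 : ∑ l, ((star U *ᵥ w) l)^2 = (star U *ᵥ w) ⬝ᵥ (star U *ᵥ w) := by
    simp [dotProduct, sq]
  rw [h0]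
  nth_rewrite 1 [hsU]
  rw [Matrix.mulVec_transpose, ← Matrix.dotProduct_mulVec, Matrix.mulVec_mulVec, hU2,
    Matrix.one_mulVec]

lemma aux_quad_bound {U : Matrix (Fin n) (Fin n) ℝ} (hU2 : U * star U = 1)
    {e : Fin n → ℝ} {c : ℝ} (he0 : ∀ j, 0 ≤ e j) (hec : ∀ j, e j ≤ c)
    {w : Fin n → ℝ} (hw : w ⬝ᵥ w = 1) :
    |w ⬝ᵥ ((U * diagonal e * star U) *ᵥ w)| ≤ c := by
  rw [aux_dot_conj]
  have h1 : ∀ l ∈ Finset.univ, (0:ℝ) ≤ e l * ((star U *ᵥ w) l)^2 :=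
    fun l _ => mul_nonneg (he0 l) (sq_nonneg _)
  rw [abs_of_nonneg (Finset.sum_nonneg h1)]
  calc ∑ l, e l * ((star U *ᵥ w) l)^2 ≤ ∑ l, c * ((star U *ᵥ w) l)^2 :=
    Finset.sum_le_sum fun l _ => mul_le_mul_of_nonneg_right (hec l) (sq_nonneg _)
  _ = c * ∑ l, ((star U *ᵥ w) l)^2 := by rw [Finset.mul_sum]
  _ = c := by rw [aux_dot_self hU2 w, hw, mul_one]

lemma aux_entry_bound' {U : Matrix (Fin n) (Fin n) ℝ} (hU2 : U * star U = 1)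
    {e : Fin n → ℝ} {c : ℝ} (hc : 0 ≤ c) (he0 : ∀ j, 0 ≤ e j) (hec : ∀ j, e j ≤ c)
    (i j : Fin n) : |(U * diagonal e * star U) i j| ≤ c := by
  have hrow : ∀ a : Fin n, ∑ l, (U a l)^2 = 1 := by
    intro a
    have := congrFun (congrFun hU2 a) a
    simpa [Matrix.mul_apply, Matrix.one_apply, sq] using this
  have hentry : (U * diagonal e * star U) i j = ∑ l, U i l * e l * U j l := by
    rw [Matrix.mul_apply]
    refine Finset.sum_congr rfl fun l _ => ?_
    rw [Matrix.mul_diagonal, Matrix.star_apply, star_trivial]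
  rw [hentry]
  have hCS : ∑ l, |U i l| * |U j l| ≤ 1 := by
    have h1 := Finset.sum_mul_sq_le_sq_mul_sq Finset.univ (fun l => |U i l|) (fun l => |U j l|)
    simp only [sq_abs] at h1
    rw [hrow i, hrow j, mul_one] at h1
    have h2 : 0 ≤ ∑ l, |U i l| * |U j l| :=
      Finset.sum_nonneg fun l _ => mul_nonneg (abs_nonneg _) (abs_nonneg _)
    nlinarith
  calc |∑ l, U i l * e l * U j l| ≤ ∑ l, |U i l * e l * U j l| :=
    Finset.abs_sum_le_sum_abs _ _
  _ = ∑ l, |U i l| * e l * |U j l| := by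
    refine Finset.sum_congr rfl fun l _ => ?_
    rw [abs_mul, abs_mul, abs_of_nonneg (he0 l)]
  _ ≤ ∑ l, |U i l| * c * |U j l| := by
    refine Finset.sum_le_sum fun l _ => ?_
    exact mul_le_mul_of_nonneg_right (mul_le_mul_of_nonneg_left (hec l) (abs_nonneg _)) (abs_nonneg _)
  _ = c * ∑ l, |U i l| * |U j l| := by rw [Finset.mul_sum]; exact Finset.sum_congr rfl fun l _ => by ring
  _ ≤ c * 1 := mul_le_mul_of_nonneg_left hCS hc
  _ = c := mul_one c

lemma aux_trace_bound {A E : Matrix (Fin n) (Fin n) ℝ} (hA : A.IsHermitian) {c : ℝ} (hc : 0 ≤ c)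
    (hquad : ∀ w : Fin n → ℝ, w ⬝ᵥ w = 1 → |w ⬝ᵥ (E *ᵥ w)| ≤ c) :
    |(A * E).trace| ≤ (∑ l, |hA.eigenvalues l|) * c := by
  set V : Matrix (Fin n) (Fin n) ℝ := (hA.eigenvectorUnitary : Matrix (Fin n) (Fin n) ℝ) with hVdef
  set lam : Fin n → ℝ := hA.eigenvalues with hlamdef
  have hV1 : star V * V = 1 := mem_unitaryGroup_iff'.mp hA.eigenvectorUnitary.2
  have hspec : A = V * diagonal lam * star V := by simpa using hA.spectral_theorem
  have htr : (A * E).trace = (diagonal lam * (star V * E * V)).trace := by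
    calc (A * E).trace = (V * (diagonal lam * (star V * E))).trace := by
          rw [hspec]; rw [Matrix.mul_assoc, Matrix.mul_assoc]
    _ = ((diagonal lam * (star V * E)) * V).trace := Matrix.trace_mul_comm _ _
    _ = (diagonal lam * (star V * E * V)).trace := by rw [Matrix.mul_assoc]
  have hdiagtr : ∀ M : Matrix (Fin n) (Fin n) ℝ,
      (diagonal lam * M).trace = ∑ l, lam l * M l l := by
    intro M
    simp [Matrix.trace, Matrix.diag, Matrix.diagonal_mul]
  have hMll : ∀ l, (star V * E * V) l l = (fun a => V a l) ⬝ᵥ (E *ᵥ (fun a => V a l)) := by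
    intro l
    simp only [Matrix.mul_apply, Matrix.star_apply, star_trivial, dotProduct, Matrix.mulVec,
      Finset.sum_mul, Finset.mul_sum]
    rw [Finset.sum_comm]
    exact Finset.sum_congr rfl fun a _ => Finset.sum_congr rfl fun b _ => by ring
  have hnorm : ∀ l, (fun a => V a l) ⬝ᵥ (fun a => V a l) = 1 := by
    intro l
    have := congrFun (congrFun hV1 l) l
    simpa [Matrix.mul_apply, Matrix.one_apply, dotProduct] using this
  rw [htr, hdiagtr]
  calc |∑ l, lam l * (star V * E * V) l l| ≤ ∑ l, |lam l * (star V * E * V) l l| :=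
      Finset.abs_sum_le_sum_abs _ _
  _ ≤ ∑ l, |lam l| * c := by
      refine Finset.sum_le_sum fun l _ => ?_
      rw [abs_mul]
      refine mul_le_mul_of_nonneg_left ?_ (abs_nonneg _)
      rw [hMll l]
      exact hquad _ (hnorm l)
  _ = (∑ l, |lam l|) * c := by rw [Finset.sum_mul]
lemma aux_conj_sub {U : Matrix (Fin n) (Fin n) ℝ} (e f : Fin n → ℝ) :
    U * diagonal e * star U - U * diagonal f * star U =
      U * diagonal (fun j => e j - f j) * star U := by
  have h : diagonal (fun j => e j - f j) = diagonal e - diagonal f := by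
    have : (fun j => e j - f j) = e - f := rfl
    rw [this, Matrix.diagonal_sub]
    rfl
  rw [h, Matrix.mul_sub, Matrix.sub_mul]

lemma aux_conj_smul {U : Matrix (Fin n) (Fin n) ℝ} (c : ℝ) (e : Fin n → ℝ) :
    c • (U * diagonal e * star U) = U * diagonal (fun j => c * e j) * star U := by
  have h : diagonal (fun j => c * e j) = c • diagonal e := by
    have : (fun j => c * e j) = c • e := rfl
    rw [this, Matrix.diagonal_smul]
  rw [h, Matrix.mul_smul, Matrix.smul_mul]

end StmtAux


/-- Theorem 2 for the positive semidefinite cone. For the conic program with one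
PSD block, the residual of `(x, S, Z)` is the pair
`r_d = Px + (tr(A₁Z), …, tr(A_kZ)) + q` and `r_p = B − Σᵢ xᵢAᵢ − S`, and `‖R‖_∞`
is the maximum absolute entry over `r_d` and `r_p`. Given a complementary pair of
PSD matrices `S*Z* = 0` with `rank S* + rank Z* = n`, `μ⁰ = ‖R(x*, S*, Z*)‖_∞ > 0`,
`C = S* − Z*` (symmetric with all eigenvalues `dⱼ` nonzero), the warmstart `S⁰`
(the unique symmetric positive definite solution of `S − C − μ⁰S⁻¹ = 0`),
`Z⁰ = S⁰ − C`, `x⁰ = x*` satisfies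
`‖R(x⁰, S⁰, Z⁰)‖_∞ ≤ (1 + (maxᵢ tr|Aᵢ| + 1)/minⱼ|dⱼ|)·μ⁰`, where `tr|Aᵢ|` is the
sum of the absolute values of the eigenvalues of the symmetric matrix `Aᵢ`. -/
theorem stmt15 (n k : ℕ)
    (hk : (Finset.univ : Finset (Fin k)).Nonempty)
    (hn : (Finset.univ : Finset (Fin n)).Nonempty)
    (A : Fin k → Matrix (Fin n) (Fin n) ℝ) (hA : ∀ i, (A i).IsHermitian)
    (B : Matrix (Fin n) (Fin n) ℝ) (hB : B.IsSymm)
    (P : Matrix (Fin k) (Fin k) ℝ) (hP : P.PosSemidef)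
    (q : Fin k → ℝ)
    (xstar : Fin k → ℝ) (Sstar Zstar : Matrix (Fin n) (Fin n) ℝ)
    (hS : Sstar.PosSemidef) (hZ : Zstar.PosSemidef) (hSZ : Sstar * Zstar = 0)
    (hrank : Sstar.rank + Zstar.rank = n)
    (μ0 : ℝ)
    (hμ0def : μ0 = max ‖P.mulVec xstar + (fun i => ((A i) * Zstar).trace) + q‖
      ‖(fun ij : Fin n × Fin n => (B - ∑ i, xstar i • A i - Sstar) ij.1 ij.2)‖)
    (hμ0 : 0 < μ0)
    (C : Matrix (Fin n) (Fin n) ℝ) (hCdef : C = Sstar - Zstar)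
    (hCh : C.IsHermitian)
    (S0 : Matrix (Fin n) (Fin n) ℝ) (hS0s : S0.IsSymm) (hS0pd : S0.PosDef)
    (heq : S0 - C - μ0 • S0⁻¹ = 0) :
    let Z0 : Matrix (Fin n) (Fin n) ℝ := S0 - C
    max ‖P.mulVec xstar + (fun i => ((A i) * Z0).trace) + q‖
        ‖(fun ij : Fin n × Fin n => (B - ∑ i, xstar i • A i - S0) ij.1 ij.2)‖ ≤
      (1 + ((Finset.univ.sup' hk fun i => ∑ j, |(hA i).eigenvalues j|) + 1) /
        (Finset.univ.inf' hn fun j => |hCh.eigenvalues j|)) * μ0 := by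
  intro Z0
  have hZ0def : Z0 = S0 - C := rfl
  set U : Matrix (Fin n) (Fin n) ℝ := (hCh.eigenvectorUnitary : Matrix (Fin n) (Fin n) ℝ)
    with hUdef
  set d : Fin n → ℝ := hCh.eigenvalues with hddef
  have hU1 : star U * U = 1 := mem_unitaryGroup_iff'.mp hCh.eigenvectorUnitary.2
  have hU2 : U * star U = 1 := mem_unitaryGroup_iff.mp hCh.eigenvectorUnitary.2
  have hcol : ∀ j, C *ᵥ (fun i => U i j) = d j • (fun i => U i j) := by
    intro j
    have h1 := hCh.mulVec_eigenvectorBasis j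
    have h2 : (fun i => U i j) = ⇑(hCh.eigenvectorBasis j) := by
      funext i; exact hCh.eigenvectorUnitary_apply i j
    rw [h2]
    simpa using h1
  have hnormcol : ∀ j, (fun i => U i j) ⬝ᵥ (fun i => U i j) = 1 := by
    intro j
    have := congrFun (congrFun hU1 j) j
    simpa [Matrix.mul_apply, Matrix.one_apply, dotProduct] using this
  have hZt : Zstarᵀ = Zstar := by
    rw [← Matrix.conjTranspose_eq_transpose_of_trivial, hZ.isHermitian]
  have hSt : Sstarᵀ = Sstar := by
    rw [← Matrix.conjTranspose_eq_transpose_of_trivial, hS.isHermitian]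
  have hZS : Zstar * Sstar = 0 := by
    have := congrArg Matrix.transpose hSZ
    rwa [Matrix.transpose_mul, hZt, hSt, Matrix.transpose_zero] at this
  -- all eigenvalues of C are nonzero
  have hd0 : ∀ j, d j ≠ 0 := by
    intro j hdj
    have hCv : C *ᵥ (fun i => U i j) = 0 := by rw [hcol j, hdj, zero_smul]
    have hsub : Sstar *ᵥ (fun i => U i j) = Zstar *ᵥ (fun i => U i j) := by
      have : Sstar *ᵥ (fun i => U i j) - Zstar *ᵥ (fun i => U i j) = 0 := by
        rw [← Matrix.sub_mulVec, ← hCdef, hCv]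
      linear_combination (norm := abel) this
    have hSv : Sstar *ᵥ (fun i => U i j) = 0 := by
      have hdot : (Sstar *ᵥ fun i => U i j) ⬝ᵥ (Sstar *ᵥ fun i => U i j) = 0 := by
        nth_rewrite 2 [hsub]
        rw [Matrix.dotProduct_mulVec]
        have : (Sstar *ᵥ fun i => U i j) ᵥ* Zstar = 0 := by
          rw [← Matrix.mulVec_transpose, hZt, Matrix.mulVec_mulVec, hZS, Matrix.zero_mulVec]
        rw [this, zero_dotProduct]
      exact dotProduct_self_eq_zero.mp hdot
    have hZv : Zstar *ᵥ (fun i => U i j) = 0 := by rw [← hsub, hSv]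
    have := aux_ker hZt hSZ hrank hSv hZv
    have h1 := hnormcol j
    rw [this] at h1
    simp at h1
  have heig : ∀ j, Sstar *ᵥ (fun i => U i j) = max (d j) 0 • (fun i => U i j) ∧
      Zstar *ᵥ (fun i => U i j) = max (-(d j)) 0 • (fun i => U i j) := by
    intro j
    refine aux_eig hS hZ hSZ hZS (hd0 j) ?_
    rw [← hCdef]; exact hcol j
  have hSmat : Sstar = U * diagonal (fun j => max (d j) 0) * star U :=
    aux_col_to_mat hU2 (fun j => (heig j).1)
  -- the explicit solution T
  have hgpos : ∀ j, 0 < gfun μ0 (d j) := fun j => gfun_pos hμ0 _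
  have hTpd : (U * diagonal (fun j => gfun μ0 (d j)) * star U).PosDef :=
    aux_conj_posdef hU1 hU2 hgpos
  have hTinv : (U * diagonal (fun j => gfun μ0 (d j)) * star U)⁻¹ =
      U * diagonal (fun j => (gfun μ0 (d j))⁻¹) * star U := by
    apply Matrix.inv_eq_right_inv
    have h1 : (U * diagonal (fun j => gfun μ0 (d j)) * star U) *
        (U * diagonal (fun j => (gfun μ0 (d j))⁻¹) * star U) =
        U * (diagonal (fun j => gfun μ0 (d j)) * diagonal (fun j => (gfun μ0 (d j))⁻¹)) *
          star U := by
      calc (U * diagonal (fun j => gfun μ0 (d j)) * star U) *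
          (U * diagonal (fun j => (gfun μ0 (d j))⁻¹) * star U)
          = U * diagonal (fun j => gfun μ0 (d j)) * (star U * U) *
            diagonal (fun j => (gfun μ0 (d j))⁻¹) * star U := by
            simp only [← Matrix.mul_assoc]
      _ = _ := by rw [hU1, Matrix.mul_one]; simp only [← Matrix.mul_assoc]
    rw [h1, Matrix.diagonal_mul_diagonal]
    have h2 : (fun j => gfun μ0 (d j) * (gfun μ0 (d j))⁻¹) = fun _ => (1:ℝ) := by
      funext j; exact mul_inv_cancel₀ (hgpos j).ne'
    rw [h2, Matrix.diagonal_one, Matrix.mul_one, hU2]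
  have hspecC : C = U * diagonal d * star U := by simpa using hCh.spectral_theorem
  have hTeq : (U * diagonal (fun j => gfun μ0 (d j)) * star U) - C -
      μ0 • (U * diagonal (fun j => gfun μ0 (d j)) * star U)⁻¹ = 0 := by
    rw [hTinv, aux_conj_smul]
    nth_rewrite 1 [hspecC]
    rw [aux_conj_sub, aux_conj_sub]
    have hfun : (fun j => gfun μ0 (d j) - d j - μ0 * (gfun μ0 (d j))⁻¹) =
        fun _ => (0:ℝ) := by
      funext j
      have hq := gfun_quad hμ0 (d j)
      have hg := hgpos j
      field_simp
      nlinarith [hq]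
    rw [hfun, Matrix.diagonal_zero, Matrix.mul_zero, Matrix.zero_mul]
  have hS0T : S0 = U * diagonal (fun j => gfun μ0 (d j)) * star U :=
    aux_unique hμ0 hS0pd hTpd heq hTeq
  -- the difference matrix E = S0 - Sstar
  have hE : S0 - Sstar = U * diagonal (fun j => gfun μ0 (d j) - max (d j) 0) * star U := by
    rw [hS0T, hSmat, aux_conj_sub]
  set δ : ℝ := Finset.univ.inf' hn (fun j => |hCh.eigenvalues j|) with hδdef
  have hδpos : 0 < δ := by
    rw [hδdef]
    rw [Finset.lt_inf'_iff]
    exact fun j _ => abs_pos.mpr (hd0 j)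
  have hδle : ∀ j, δ ≤ |d j| := fun j => Finset.inf'_le _ (Finset.mem_univ j)
  have hρ : 0 ≤ μ0 / δ := le_of_lt (div_pos hμ0 hδpos)
  have he0 : ∀ j, 0 ≤ gfun μ0 (d j) - max (d j) 0 := fun j => gfun_sub_nonneg hμ0 _
  have hec : ∀ j, gfun μ0 (d j) - max (d j) 0 ≤ μ0 / δ := by
    intro j
    have h1 : (gfun μ0 (d j) - max (d j) 0) * |d j| ≤ μ0 := gfun_sub_le hμ0 _
    have h2 : gfun μ0 (d j) - max (d j) 0 ≤ μ0 / |d j| := by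
      rw [le_div_iff₀ (abs_pos.mpr (hd0 j))]
      exact h1
    refine h2.trans ?_
    gcongr
    · exact hδle j
  have hEentry : ∀ i j, |(S0 - Sstar) i j| ≤ μ0 / δ := by
    intro i j
    rw [hE]
    exact aux_entry_bound' hU2 hρ he0 hec i j
  have hEquad : ∀ w : Fin n → ℝ, w ⬝ᵥ w = 1 → |w ⬝ᵥ ((S0 - Sstar) *ᵥ w)| ≤ μ0 / δ := by
    intro w hw
    rw [hE]
    exact aux_quad_bound hU2 he0 hec hw
  have htraceE : ∀ i, |((A i) * (S0 - Sstar)).trace| ≤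
      (∑ l, |(hA i).eigenvalues l|) * (μ0 / δ) :=
    fun i => aux_trace_bound (hA i) hρ hEquad
  set T1 : ℝ := Finset.univ.sup' hk (fun i => ∑ j, |(hA i).eigenvalues j|) with hT1def
  have hT1le : ∀ i, (∑ l, |(hA i).eigenvalues l|) ≤ T1 := by
    intro i
    exact Finset.le_sup' (fun i => ∑ j, |(hA i).eigenvalues j|) (Finset.mem_univ i)
  have hT1nonneg : 0 ≤ T1 := by
    obtain ⟨i0, _⟩ := hk
    exact le_trans (Finset.sum_nonneg fun l _ => abs_nonneg _) (hT1le i0)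
  -- old residual bounds
  have hold_d : ‖P.mulVec xstar + (fun i => ((A i) * Zstar).trace) + q‖ ≤ μ0 := by
    rw [hμ0def]; exact le_max_left _ _
  have hold_p : ‖(fun ij : Fin n × Fin n =>
      (B - ∑ i, xstar i • A i - Sstar) ij.1 ij.2)‖ ≤ μ0 := by
    rw [hμ0def]; exact le_max_right _ _
  -- right-hand side
  have hRHS : (1 + (T1 + 1) / δ) * μ0 = μ0 + (T1 + 1) * (μ0 / δ) := by
    field_simp
  rw [hRHS]
  apply max_le
  · -- dual residual
    have hvecdec : (P.mulVec xstar + (fun i => ((A i) * Z0).trace) + q) =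
        (P.mulVec xstar + (fun i => ((A i) * Zstar).trace) + q) +
          (fun i => ((A i) * (S0 - Sstar)).trace) := by
      funext i
      have hZ0' : Z0 = Zstar + (S0 - Sstar) := by rw [hZ0def, hCdef]; abel
      simp only [Pi.add_apply]
      rw [hZ0', Matrix.mul_add, Matrix.trace_add]
      ring
    rw [hvecdec]
    refine le_trans (norm_add_le _ _) ?_
    have h1 : ‖(fun i => ((A i) * (S0 - Sstar)).trace)‖ ≤ T1 * (μ0 / δ) := by
      rw [pi_norm_le_iff_of_nonneg (mul_nonneg hT1nonneg hρ)]
      intro i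
      rw [Real.norm_eq_abs]
      exact le_trans (htraceE i) (mul_le_mul_of_nonneg_right (hT1le i) hρ)
    have h2 := add_le_add hold_d h1
    refine h2.trans ?_
    nlinarith
  · -- primal residual
    have hvecdec : (fun ij : Fin n × Fin n => (B - ∑ i, xstar i • A i - S0) ij.1 ij.2) =
        (fun ij : Fin n × Fin n => (B - ∑ i, xstar i • A i - Sstar) ij.1 ij.2) +
          (fun ij : Fin n × Fin n => (-(S0 - Sstar)) ij.1 ij.2) := by
      funext ij
      simp only [Pi.add_apply, Matrix.sub_apply, Matrix.neg_apply]
      ring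
    rw [hvecdec]
    refine le_trans (norm_add_le _ _) ?_
    have h1 : ‖(fun ij : Fin n × Fin n => (-(S0 - Sstar)) ij.1 ij.2)‖ ≤ μ0 / δ := by
      rw [pi_norm_le_iff_of_nonneg hρ]
      intro ij
      rw [Real.norm_eq_abs, Matrix.neg_apply, abs_neg]
      exact hEentry ij.1 ij.2
    have h2 := add_le_add hold_p h1
    refine h2.trans ?_
    nlinarith
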